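/- Let D be a τ-atomic integral domain with τ symmetric, refinable, and associate preserving. If D is a τ-irreducible divisor finite domain, then D satisfies τ-ACCP. -/

import Mathlib

/-- `a` is a nonzero nonunit, i.e. an element of `D^#`. -/
def NzNonunit {D : Type*} [CommRing D] (a : D) : Prop := a ≠ 0 ∧ ¬ IsUnit a

/-- `l` is the list of factors of a `τ`-factorization of `a`:
`a = λ * l.prod` for a unit `λ`, the factors are nonzero nonunits and pairwise `τ`-related. -/
def TauFact {D : Type*} [CommRing D] (τ : D → D → Prop) (l : List D) (a : D) : Prop :=
  l ≠ [] ∧ (∀ b ∈ l, NzNonunit b) ∧ l.Pairwise τ ∧ ∃ u : Dˣ, a = (u : D) * l.prod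

/-- `b` τ-divides `a`: `b` occurs as a factor in some τ-factorization of `a`. -/
def TauDvd {D : Type*} [CommRing D] (τ : D → D → Prop) (b a : D) : Prop :=
  ∃ l, TauFact τ l a ∧ b ∈ l

/-- `a` is τ-irreducible (a τ-atom): all its τ-factorizations are trivial. -/
def TauIrred {D : Type*} [CommRing D] (τ : D → D → Prop) (a : D) : Prop :=
  NzNonunit a ∧ ∀ l, TauFact τ l a → l.length = 1

/-- `l` is a τ-atomic factorization of `a`. -/
def TauAtomicFact {D : Type*} [CommRing D] (τ : D → D → Prop) (l : List D) (a : D) : Prop :=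
  TauFact τ l a ∧ ∀ b ∈ l, TauIrred τ b

/-- `D` is τ-atomic: every nonzero nonunit has a τ-atomic factorization. -/
def TauAtomic {D : Type*} [CommRing D] (τ : D → D → Prop) : Prop :=
  ∀ a : D, NzNonunit a → ∃ l, TauAtomicFact τ l a

def TauSymm {D : Type*} [CommRing D] (τ : D → D → Prop) : Prop :=
  ∀ a b, τ a b → τ b a

/-- τ is associate preserving. -/
def TauAssocPres {D : Type*} [CommRing D] (τ : D → D → Prop) : Prop :=
  ∀ a b b' : D, τ a b → Associated b b' → τ a b'

/-- τ is refinable: replacing each factor of a τ-factorization by a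
τ-factorization of it again yields a τ-factorization. -/
def TauRefinable {D : Type*} [CommRing D] (τ : D → D → Prop) : Prop :=
  ∀ (a : D) (l : List D) (F : List (List D)),
    TauFact τ l a → List.Forall₂ (fun b m => TauFact τ m b) l F →
    TauFact τ F.flatten a

/-- `a` is a vertex of the τ-irreducible divisor graph `G_τ(x)`. -/
def GVert {D : Type*} [CommRing D] (τ : D → D → Prop) (x a : D) : Prop :=
  TauIrred τ a ∧ TauDvd τ a x

/-- `a` and `b` are adjacent (distinct, i.e. non-associated, vertices joined by an edge)
in `G_τ(x)`: some τ-factorization of `x` contains associates of both. -/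
def GAdj {D : Type*} [CommRing D] (τ : D → D → Prop) (x a b : D) : Prop :=
  GVert τ x a ∧ GVert τ x b ∧ ¬ Associated a b ∧
  ∃ l, TauFact τ l x ∧ (∃ a' ∈ l, Associated a a') ∧ (∃ b' ∈ l, Associated b b')

/-- `G_τ(x)` is connected (vertices are taken up to associates). -/
def GConnected {D : Type*} [CommRing D] (τ : D → D → Prop) (x : D) : Prop :=
  ∀ a b, GVert τ x a → GVert τ x b →
    Relation.ReflTransGen (fun u v => GAdj τ x u v ∨ Associated u v) a b

/-- The reduced graph `G̅_τ(x)` (loops deleted) is connected; loops do not affect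
connectivity, so this is connectivity with respect to the same adjacency relation. -/
def GBarConnected {D : Type*} [CommRing D] (τ : D → D → Prop) (x : D) : Prop :=
  ∀ a b, GVert τ x a → GVert τ x b →
    Relation.ReflTransGen (fun u v => GAdj τ x u v ∨ Associated u v) a b

/-- `G_τ(x)` is a pseudoclique: any two non-associated vertices are adjacent.
(Equivalently, the reduced graph `G̅_τ(x)` is a clique / complete graph.) -/
def GPseudoclique {D : Type*} [CommRing D] (τ : D → D → Prop) (x : D) : Prop :=
  ∀ a b, GVert τ x a → GVert τ x b → ¬ Associated a b → GAdj τ x a b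

/-- `Diam(G_τ(x)) ≤ 1`: any two vertices are equal (associated) or adjacent. -/
def GDiamLeOne {D : Type*} [CommRing D] (τ : D → D → Prop) (x : D) : Prop :=
  ∀ a b, GVert τ x a → GVert τ x b → Associated a b ∨ GAdj τ x a b

/-- `G_τ(x)` has finitely many vertices (up to associates). -/
def GVertFinite {D : Type*} [CommRing D] (τ : D → D → Prop) (x : D) : Prop :=
  ∃ s : Finset D, ∀ a, GVert τ x a → ∃ c ∈ s, Associated a c

/-- The vertex `a` of `G_τ(x)` has finite degree: finitely many adjacent vertices
up to associates (loops not counted). -/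
def GDegFinite {D : Type*} [CommRing D] (τ : D → D → Prop) (x a : D) : Prop :=
  ∃ s : Finset D, ∀ b, GAdj τ x a b → ∃ c ∈ s, Associated b c

/-- The vertex `a` of `G_τ(x)` carries finitely many loops: there is a uniform bound on
the number of occurrences of associates of `a` in τ-atomic factorizations of `x`. -/
def GLoopsFinite {D : Type*} [CommRing D] (τ : D → D → Prop) (x a : D) : Prop :=
  ∃ N : ℕ, ∀ l m : List D, TauAtomicFact τ l x → m.Sublist l →
    (∀ b ∈ m, Associated a b) → m.length ≤ N

/-- `D` satisfies τ-ACCP. -/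
def TauACCP {D : Type*} [CommRing D] (τ : D → D → Prop) : Prop :=
  ∀ a : ℕ → D, (∀ i, TauDvd τ (a (i + 1)) (a i)) →
    ∃ N, ∀ i, N ≤ i → Associated (a i) (a N)

/-- `D` is a τ-UFD. -/
def TauUFD {D : Type*} [CommRing D] (τ : D → D → Prop) : Prop :=
  TauAtomic τ ∧ ∀ (x : D) (l₁ l₂ : List D), TauAtomicFact τ l₁ x → TauAtomicFact τ l₂ x →
    Multiset.Rel Associated (l₁ : Multiset D) (l₂ : Multiset D)

/-- `D` is a τ-FFD: each nonzero nonunit has only finitely many τ-factorizations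
up to rearrangement and associates. -/
def TauFFD {D : Type*} [CommRing D] (τ : D → D → Prop) : Prop :=
  ∀ x : D, NzNonunit x → ∃ S : Finset (Multiset D),
    ∀ l : List D, TauFact τ l x → ∃ m ∈ S, Multiset.Rel Associated (l : Multiset D) m

/-- `D` is a τ-WFFD: each nonzero nonunit has finitely many τ-divisors up to associates. -/
def TauWFFD {D : Type*} [CommRing D] (τ : D → D → Prop) : Prop :=
  ∀ x : D, NzNonunit x → ∃ s : Finset D,
    ∀ b, TauDvd τ b x → ∃ c ∈ s, Associated b c

/-- `D` is a τ-idf domain: each nonzero nonunit has finitely many τ-irreducible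
τ-divisors up to associates. -/
def TauIdf {D : Type*} [CommRing D] (τ : D → D → Prop) : Prop :=
  ∀ x : D, NzNonunit x → ∃ s : Finset D,
    ∀ b, TauIrred τ b → TauDvd τ b x → ∃ c ∈ s, Associated b c



section Aux

variable {D : Type*} [CommRing D] [IsDomain D] {τ : D → D → Prop}

lemma tauFact_prod_associated {l : List D} {a : D} (h : TauFact τ l a) :
    Associated l.prod a := by
  obtain ⟨-, -, -, u, hu⟩ := h
  exact ⟨u, by rw [hu, mul_comm]⟩

lemma nzNonunit_of_tauFact {l : List D} {a : D} (h : TauFact τ l a) : NzNonunit a := by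
  obtain ⟨b, hb⟩ := List.exists_mem_of_ne_nil l h.1
  have hassoc : Associated l.prod a := tauFact_prod_associated h
  constructor
  · obtain ⟨-, hmem, -, u, hu⟩ := h
    rw [hu]
    refine mul_ne_zero (Units.ne_zero u) (List.prod_ne_zero ?_)
    intro h0; exact (hmem 0 h0).1 rfl
  · intro hun
    have hp : IsUnit l.prod := hassoc.symm.isUnit hun
    exact (h.2.1 b hb).2 (isUnit_of_dvd_unit (List.dvd_prod hb) hp)

lemma tauFact_singleton {b : D} (h : NzNonunit b) : TauFact τ [b] b :=
  ⟨by simp, by simpa using h, by simp, 1, by simp⟩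

lemma tauFact_refine (href : TauRefinable τ) {l : List D} {a : D} (h : TauFact τ l a)
    (g : D → List D) (hg : ∀ b ∈ l, TauFact τ (g b) b) :
    TauFact τ (l.map g).flatten a :=
  href a l (l.map g) h (List.forall₂_map_right_iff.2 (List.forall₂_same.2 hg))

lemma length_le_flatten {l : List D} {g : D → List D} (hg : ∀ b ∈ l, g b ≠ []) :
    l.length ≤ ((l.map g).flatten).length := by
  induction l with
  | nil => simp
  | cons x xs ih =>
    have h1 : 0 < (g x).length := List.length_pos_iff.2 (hg x (by simp))
    have h2 := ih (fun b hb => hg b (by simp [hb]))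
    simp only [List.map_cons, List.flatten_cons, List.length_append, List.length_cons]
    omega

lemma length_lt_flatten {l : List D} {g : D → List D} (hg : ∀ b ∈ l, g b ≠ [])
    {b : D} (hb : b ∈ l) (h2 : 2 ≤ (g b).length) :
    l.length + 1 ≤ ((l.map g).flatten).length := by
  obtain ⟨l₁, l₂, rfl⟩ := List.append_of_mem hb
  have e1 := length_le_flatten (l := l₁) (g := g) (fun c hc => hg c (by simp [hc]))
  have e2 := length_le_flatten (l := l₂) (g := g) (fun c hc => hg c (by simp [hc]))
  simp only [List.map_append, List.map_cons, List.flatten_append, List.flatten_cons,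
    List.length_append, List.length_cons]
  omega

lemma map_prod_associated {l : List D} {r : D → D} (h : ∀ b ∈ l, Associated b (r b)) :
    Associated (l.map r).prod l.prod := by
  induction l with
  | nil => simp
  | cons x xs ih =>
    simp only [List.map_cons, List.prod_cons]
    exact Associated.mul_mul (h x (by simp)).symm (ih (fun b hb => h b (by simp [hb])))

end Aux

theorem stmt15 {D : Type*} [CommRing D] [IsDomain D] (τ : D → D → Prop)
    (hsym : TauSymm τ) (href : TauRefinable τ) (hap : TauAssocPres τ)
    (hatomic : TauAtomic τ) (hidf : TauIdf τ) :
    TauACCP τ := by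
  classical
  intro a hchain
  by_contra hcon
  push_neg at hcon
  obtain ⟨l₀, hl₀, -⟩ := hchain 0
  have ha0 : NzNonunit (a 0) := nzNonunit_of_tauFact hl₀
  -- there are unboundedly many strict consecutive steps
  have hstrict : ∀ N, ∃ i, N ≤ i ∧ ¬ Associated (a (i + 1)) (a i) := by
    by_contra hno
    push_neg at hno
    obtain ⟨N, hN⟩ := hno
    obtain ⟨i, hiN, hni⟩ := hcon N
    refine hni ?_
    clear hni
    induction i, hiN using Nat.le_induction with
    | base => rfl
    | succ i hi ih => exact (hN i hi).trans ih
  -- one-step extension of factorizations of a 0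
  have hstep : ∀ (n : ℕ) (L : List D), TauFact τ L (a 0) → a n ∈ L →
      ∃ L', TauFact τ L' (a 0) ∧ a (n + 1) ∈ L' ∧ L.length ≤ L'.length ∧
        (¬ Associated (a (n + 1)) (a n) → L.length + 1 ≤ L'.length) := by
    intro n L hL hmem
    obtain ⟨m, hm, hmm⟩ := hchain n
    set g : D → List D := fun x => if x = a n then m else [x] with hgdef
    have hgm : g (a n) = m := by simp [hgdef]
    have hfact : ∀ b ∈ L, TauFact τ (g b) b := by
      intro b hb
      by_cases hba : b = a n
      · subst hba; rw [hgm]; exact hm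
      · simp only [hgdef, if_neg hba]
        exact tauFact_singleton (hL.2.1 b hb)
    have hne : ∀ b ∈ L, g b ≠ [] := fun b hb => (hfact b hb).1
    refine ⟨(L.map g).flatten, tauFact_refine href hL g hfact, ?_, length_le_flatten hne, ?_⟩
    · exact List.mem_flatten.2 ⟨g (a n), List.mem_map_of_mem (f := g) hmem, hgm ▸ hmm⟩
    · intro hstr
      refine length_lt_flatten hne hmem ?_
      rw [hgm]
      match m, hm, hmm with
      | [], hm, hmm => exact absurd rfl hm.1
      | [c], hm, hmm =>
        exfalso
        have hc : a (n + 1) = c := List.mem_singleton.1 hmm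
        obtain ⟨-, -, -, u, hu⟩ := hm
        refine hstr ⟨u, ?_⟩
        rw [hu, ← hc]
        simp [mul_comm]
      | c :: d :: m', hm, hmm => simp only [List.length_cons]; omega
  -- multi-step extension
  have hext : ∀ (n n' : ℕ), n ≤ n' → ∀ L : List D, TauFact τ L (a 0) → a n ∈ L →
      ∃ L', TauFact τ L' (a 0) ∧ a n' ∈ L' ∧ L.length ≤ L'.length := by
    intro n n' hle
    induction n', hle using Nat.le_induction with
    | base => exact fun L h1 h2 => ⟨L, h1, h2, le_rfl⟩
    | succ n' hn ih =>
      intro L h1 h2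
      obtain ⟨L1, hL1, hm1, hlen1⟩ := ih L h1 h2
      obtain ⟨L2, hL2, hm2, hlen2, -⟩ := hstep n' L1 hL1 hm1
      exact ⟨L2, hL2, hm2, hlen1.trans hlen2⟩
  -- factorizations of a 0 of unbounded length
  have hlen : ∀ k : ℕ, ∃ (n : ℕ) (L : List D), TauFact τ L (a 0) ∧ a n ∈ L ∧ k ≤ L.length := by
    intro k
    induction k with
    | zero => exact ⟨0, [a 0], tauFact_singleton ha0, List.mem_singleton.2 rfl, Nat.zero_le _⟩
    | succ k ih =>
      obtain ⟨n, L, hL, hm, hk⟩ := ih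
      obtain ⟨i, hni, hstri⟩ := hstrict n
      obtain ⟨L1, hL1, hm1, hlen1⟩ := hext n i hni L hL hm
      obtain ⟨L2, hL2, hm2, -, hlen2⟩ := hstep i L1 hL1 hm1
      have := hlen2 hstri
      exact ⟨i + 1, L2, hL2, hm2, by omega⟩
  -- atomic factorizations of a 0 of unbounded length
  have hatomlen : ∀ k : ℕ, ∃ A : List D,
      TauFact τ A (a 0) ∧ (∀ b ∈ A, TauIrred τ b) ∧ k ≤ A.length := by
    intro k
    obtain ⟨n, L, hL, -, hk⟩ := hlen k
    set g : D → List D := fun x =>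
      if h : NzNonunit x then (hatomic x h).choose else [x] with hgdef
    have hfact : ∀ b ∈ L, TauFact τ (g b) b := by
      intro b hb
      have hnz := hL.2.1 b hb
      simp only [hgdef, dif_pos hnz]
      exact (hatomic b hnz).choose_spec.1
    have hirr : ∀ b ∈ L, ∀ c ∈ g b, TauIrred τ c := by
      intro b hb c hc
      have hnz := hL.2.1 b hb
      simp only [hgdef, dif_pos hnz] at hc
      exact (hatomic b hnz).choose_spec.2 c hc
    refine ⟨(L.map g).flatten, tauFact_refine href hL g hfact, ?_,
      hk.trans (length_le_flatten (fun b hb => (hfact b hb).1))⟩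
    intro c hc
    obtain ⟨mm, hmm, hcm⟩ := List.mem_flatten.1 hc
    obtain ⟨x, hx, rfl⟩ := List.mem_map.1 hmm
    exact hirr x hx c hcm
  -- the finite set of τ-irreducible τ-divisors of a 0
  obtain ⟨s, hs⟩ := hidf (a 0) ha0
  set r : D → D := fun x => if h : ∃ c ∈ s, Associated x c then h.choose else x with hrdef
  have hrspec : ∀ x, (∃ c ∈ s, Associated x c) → r x ∈ s ∧ Associated x (r x) := by
    intro x hx
    simp only [hrdef, dif_pos hx]
    exact ⟨hx.choose_spec.1, hx.choose_spec.2⟩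
  choose A hA1 hA2 hA3 using hatomlen
  have hAmem : ∀ k, ∀ b ∈ A k, r b ∈ s ∧ Associated b (r b) ∧ NzNonunit b := by
    intro k b hb
    have h1 : TauIrred τ b := hA2 k b hb
    have h2 : TauDvd τ b (a 0) := ⟨A k, hA1 k, hb⟩
    obtain ⟨hr1, hr2⟩ := hrspec b (hs b h1 h2)
    exact ⟨hr1, hr2, h1.1⟩
  set M : ℕ → Multiset D := fun k => (((A k).map r : List D) : Multiset D) with hMdef
  have hMprod : ∀ k, Associated (M k).prod (a 0) := by
    intro k
    have h1 : Associated ((A k).map r).prod (A k).prod :=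
      map_prod_associated (fun b hb => (hAmem k b hb).2.1)
    have h2 : Associated (A k).prod (a 0) := tauFact_prod_associated (hA1 k)
    simpa only [hMdef, Multiset.prod_coe] using h1.trans h2
  have hMmem : ∀ k x, x ∈ M k → x ∈ s ∧ ¬ IsUnit x := by
    intro k x hx
    simp only [hMdef, Multiset.mem_coe] at hx
    obtain ⟨b, hb, rfl⟩ := List.mem_map.1 hx
    obtain ⟨h1, h2, h3⟩ := hAmem k b hb
    exact ⟨h1, fun hunit => h3.2 (h2.symm.isUnit hunit)⟩
  have hMcard : ∀ k, k ≤ Multiset.card (M k) := by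
    intro k
    simp only [hMdef, Multiset.coe_card, List.length_map]
    exact hA3 k
  -- a subsequence with strictly increasing cardinalities
  set B : ℕ → ℕ := fun n => Nat.rec 0 (fun _ prev => Multiset.card (M prev) + 1) n with hBdef
  have hBsucc : ∀ n, B (n + 1) = Multiset.card (M (B n)) + 1 := fun n => rfl
  have hcards : StrictMono (fun n => Multiset.card (M (B n))) := by
    apply strictMono_nat_of_lt_succ
    intro n
    calc Multiset.card (M (B n)) < B (n + 1) := by rw [hBsucc]; omega
      _ ≤ Multiset.card (M (B (n + 1))) := hMcard _
  -- Dickson's lemma on the count vectors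
  haveI : ∀ _c : ↥s, IsWellOrder ℕ (· < ·) := fun _ => inferInstance
  obtain ⟨i, j, hij, hle⟩ := (Set.isPWO_of_wellQuasiOrderedLE (α := ↥s → ℕ) (Set.univ : Set (↥s → ℕ))).exists_lt
    (f := fun n (c : ↥s) => Multiset.count (c : D) (M (B n))) (fun _ => Set.mem_univ _)
  have hMle : M (B i) ≤ M (B j) := by
    rw [Multiset.le_iff_count]
    intro x
    by_cases hx : x ∈ s
    · exact hle ⟨x, hx⟩
    · have hnx : x ∉ M (B i) := fun hmem => hx (hMmem _ x hmem).1
      simp [Multiset.count_eq_zero_of_notMem hnx]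
  obtain ⟨u, hu⟩ := Multiset.le_iff_exists_add.1 hMle
  have hucard : 0 < Multiset.card u := by
    have hlt := hcards hij
    simp only at hlt
    rw [hu, Multiset.card_add] at hlt
    omega
  obtain ⟨x, hxu⟩ := Multiset.card_pos_iff_exists_mem.1 hucard
  have hxnonunit : ¬ IsUnit x :=
    (hMmem (B j) x (by rw [hu]; exact Multiset.mem_add.2 (Or.inr hxu))).2
  have hunonunit : ¬ IsUnit u.prod :=
    fun h => hxnonunit (isUnit_of_dvd_unit (Multiset.dvd_prod hxu) h)
  have h1 := hMprod (B i)
  have h2 : Associated ((M (B i)).prod * u.prod) (a 0) := by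
    rw [← Multiset.prod_add, ← hu]; exact hMprod (B j)
  obtain ⟨w, hw⟩ := h1.trans h2.symm
  have hne : (M (B i)).prod ≠ 0 := by
    intro h0
    rw [h0] at h1
    exact ha0.1 ((associated_zero_iff_eq_zero _).1 h1.symm)
  have hwp : (w : D) = u.prod := mul_left_cancel₀ hne hw
  exact hunonunit (hwp ▸ w.isUnit)
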